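/- Define P_τ on ℝ_τ[x] (polynomials of degree ≤ τ) by P_τ[f](x) = (1+x)^τ(f(1/(1+x)) + f(x/(1+x))). Then P_τ has a simple dominant positive eigenvalue σ_τ equal to its spectral radius, and σ_τ > 1. -/

import Mathlib

open Polynomial Matrix Finset
open scoped ENNReal NNReal

lemma perron_core {n : ℕ} (A : Matrix (Fin (n+1)) (Fin (n+1)) ℝ)
    (hA : ∀ i j, 0 ≤ A i j) (hrow : ∀ j, 0 < A 0 j) (hcol : ∀ i, 0 < A i 0) :
    ∃ σ : ℝ, ∃ u : Fin (n+1) → ℝ, A 0 0 ≤ σ ∧ 0 < σ ∧ u ≠ 0 ∧ A.mulVec u = σ • u ∧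
      (∀ v, A.mulVec v = σ • v → ∃ t : ℝ, v = t • u) ∧
      (∀ μ v, v ≠ 0 → A.mulVec v = μ • v → μ = σ ∨ |μ| < σ) := by
  classical
  set B := A * A with hBdef
  have hmv : ∀ (M : Matrix (Fin (n+1)) (Fin (n+1)) ℝ) (v : Fin (n+1) → ℝ) (i : Fin (n+1)),
      M.mulVec v i = ∑ j, M i j * v j := fun M v i => rfl
  have hB : ∀ i j, 0 < B i j := by
    intro i j
    rw [hBdef, Matrix.mul_apply]
    calc (0:ℝ) < A i 0 * A 0 j := mul_pos (hcol i) (hrow j)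
      _ ≤ ∑ k, A i k * A k j :=
        Finset.single_le_sum (f := fun k => A i k * A k j)
          (fun k _ => mul_nonneg (hA _ _) (hA _ _)) (mem_univ 0)
  have hBpos : ∀ v : Fin (n+1) → ℝ, (∀ i, 0 ≤ v i) → v ≠ 0 → ∀ i, 0 < B.mulVec v i := by
    intro v hv hv0 i
    obtain ⟨k0, hk0⟩ : ∃ k, v k ≠ 0 := by
      by_contra h; push_neg at h; exact hv0 (funext h)
    have hk0' : 0 < v k0 := (hv k0).lt_of_ne (Ne.symm hk0)
    rw [hmv]
    exact Finset.sum_pos' (fun k _ => mul_nonneg (hB i k).le (hv k))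
      ⟨k0, mem_univ _, mul_pos (hB i k0) hk0'⟩
  set M : ℝ := ∑ i, ∑ j, B i j with hMdef
  -- the compact search set
  set K : Set (ℝ × (Fin (n+1) → ℝ)) :=
    {p | 0 ≤ p.1 ∧ (∀ i, 0 ≤ p.2 i) ∧ (∑ i, p.2 i) = 1 ∧
      ∀ i, p.1 * p.2 i ≤ B.mulVec p.2 i} with hKdef
  have hKM : ∀ p ∈ K, p.1 ≤ M := by
    rintro ⟨lam, v⟩ ⟨h0, hv, hsum, hineq⟩
    have hv1 : ∀ j, v j ≤ 1 := by
      intro j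
      calc v j ≤ ∑ i, v i := Finset.single_le_sum (fun i _ => hv i) (mem_univ j)
        _ = 1 := hsum
    calc lam = lam * ∑ i, v i := by rw [hsum]; ring
      _ = ∑ i, lam * v i := by rw [Finset.mul_sum]
      _ ≤ ∑ i, B.mulVec v i := Finset.sum_le_sum fun i _ => hineq i
      _ = ∑ i, ∑ j, B i j * v j := by simp only [hmv]
      _ ≤ ∑ i, ∑ j, B i j := by
          refine Finset.sum_le_sum fun i _ => Finset.sum_le_sum fun j _ => ?_
          calc B i j * v j ≤ B i j * 1 := by
                have := hB i j; nlinarith [hv1 j, hv j]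
            _ = B i j := mul_one _
  have hKclosed : IsClosed K := by
    have h1 : IsClosed {p : ℝ × (Fin (n+1) → ℝ) | 0 ≤ p.1} :=
      isClosed_le continuous_const continuous_fst
    have h2 : IsClosed {p : ℝ × (Fin (n+1) → ℝ) | ∀ i, 0 ≤ p.2 i} := by
      have : {p : ℝ × (Fin (n+1) → ℝ) | ∀ i, 0 ≤ p.2 i}
          = ⋂ i, {p | 0 ≤ p.2 i} := by ext p; simp
      rw [this]
      exact isClosed_iInter fun i =>
        isClosed_le continuous_const ((continuous_apply i).comp continuous_snd)
    have h3 : IsClosed {p : ℝ × (Fin (n+1) → ℝ) | (∑ i, p.2 i) = 1} :=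
      isClosed_eq (by fun_prop) continuous_const
    have h4 : IsClosed {p : ℝ × (Fin (n+1) → ℝ) | ∀ i, p.1 * p.2 i ≤ B.mulVec p.2 i} := by
      have : {p : ℝ × (Fin (n+1) → ℝ) | ∀ i, p.1 * p.2 i ≤ B.mulVec p.2 i}
          = ⋂ i, {p | p.1 * p.2 i ≤ B.mulVec p.2 i} := by ext p; simp
      rw [this]
      refine isClosed_iInter fun i => isClosed_le (by fun_prop) ?_
      have : (fun p : ℝ × (Fin (n+1) → ℝ) => B.mulVec p.2 i)
          = fun p => ∑ j, B i j * p.2 j := by funext p; rw [hmv]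
      rw [this]; fun_prop
    have : K = {p : ℝ × (Fin (n+1) → ℝ) | 0 ≤ p.1} ∩ ({p | ∀ i, 0 ≤ p.2 i} ∩
        ({p | (∑ i, p.2 i) = 1} ∩ {p | ∀ i, p.1 * p.2 i ≤ B.mulVec p.2 i})) := by
      ext p; simp only [hKdef, Set.mem_setOf_eq, Set.mem_inter_iff, and_assoc]
    rw [this]
    exact h1.inter (h2.inter (h3.inter h4))
  have hKcpt : IsCompact K := by
    refine IsCompact.of_isClosed_subset
      (IsCompact.prod (isCompact_Icc (a := (0:ℝ)) (b := M))
        (isCompact_Icc (a := (0 : Fin (n+1) → ℝ)) (b := 1))) hKclosed ?_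
    rintro ⟨lam, v⟩ hp
    obtain ⟨h0, hv, hsum, hineq⟩ := hp
    refine Set.mem_prod.mpr ⟨Set.mem_Icc.mpr ⟨h0, hKM _ ⟨h0, hv, hsum, hineq⟩⟩, ?_⟩
    refine Set.mem_Icc.mpr ⟨fun i => hv i, fun i => ?_⟩
    calc v i ≤ ∑ j, v j := Finset.single_le_sum (fun j _ => hv j) (mem_univ i)
      _ = 1 := hsum
  have hKne : K.Nonempty := by
    refine ⟨(0, fun _ => ((n:ℝ)+1)⁻¹), le_refl 0,
      fun i => by show (0:ℝ) ≤ ((n:ℝ)+1)⁻¹; positivity, ?_, ?_⟩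
    · show (∑ _i : Fin (n+1), ((n:ℝ)+1)⁻¹) = 1
      rw [Finset.sum_const, Finset.card_univ, Fintype.card_fin]
      rw [nsmul_eq_mul]; push_cast
      field_simp
    · intro i
      rw [zero_mul, hmv]
      exact Finset.sum_nonneg fun j _ => mul_nonneg (hB i j).le (by show (0:ℝ) ≤ ((n:ℝ)+1)⁻¹; positivity)
  obtain ⟨⟨r, u⟩, hmem, hmax⟩ := hKcpt.exists_isMaxOn hKne continuous_fst.continuousOn
  obtain ⟨hr0, hu0, husum, hine⟩ := hmem
  have hune : u ≠ 0 := by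
    intro h
    rw [h] at husum; simp at husum
  -- pushing new candidates
  have hpush : ∀ (lam : ℝ) (w : Fin (n+1) → ℝ), 0 ≤ lam → (∀ i, 0 ≤ w i) → w ≠ 0 →
      (∀ i, lam * w i ≤ B.mulVec w i) → lam ≤ r := by
    intro lam w hlam hw hwne hineq
    obtain ⟨k0, hk0⟩ : ∃ k, w k ≠ 0 := by
      by_contra h; push_neg at h; exact hwne (funext h)
    have hs : 0 < ∑ i, w i :=
      Finset.sum_pos' (fun i _ => hw i) ⟨k0, mem_univ _, (hw k0).lt_of_ne (Ne.symm hk0)⟩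
    have hmemK : (lam, (∑ i, w i)⁻¹ • w) ∈ K := by
      refine ⟨hlam, fun i => ?_, ?_, ?_⟩
      · show (0:ℝ) ≤ (∑ i, w i)⁻¹ * w i
        have := hw i
        positivity
      · simp only [Pi.smul_apply, smul_eq_mul, ← Finset.mul_sum]
        field_simp
      · intro i
        rw [Matrix.mulVec_smul]
        simp only [Pi.smul_apply, smul_eq_mul]
        have h1 := hineq i
        have h2 : (0:ℝ) ≤ (∑ i, w i)⁻¹ := by positivity
        nlinarith
    exact hmax hmemK
  -- B u = r u
  have heq : B.mulVec u = r • u := by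
    by_contra hne
    set z := B.mulVec u - r • u with hz
    have hz0 : ∀ i, 0 ≤ z i := by
      intro i
      simp only [hz, Pi.sub_apply, Pi.smul_apply, smul_eq_mul]
      linarith [hine i]
    have hzne : z ≠ 0 := by
      intro h
      exact hne (by rw [← sub_eq_zero]; exact h)
    set w := B.mulVec u with hwdef
    have hw : ∀ i, 0 < w i := hBpos u hu0 hune
    have hwne : w ≠ 0 := by
      intro h; have := hw 0; rw [h] at this; simp at this
    have hzrel : ∀ i, 0 < B.mulVec w i - r * w i := by
      intro i
      have h1 := hBpos z hz0 hzne i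
      have h2 : B.mulVec z = B.mulVec w - r • w := by
        rw [hz, Matrix.mulVec_sub, Matrix.mulVec_smul]
      rw [h2] at h1
      simpa using h1
    have hεpos : ∀ i ∈ Finset.univ, (0:ℝ) < (B.mulVec w i - r * w i) / w i :=
      fun i _ => div_pos (hzrel i) (hw i)
    set ε := Finset.univ.inf' ⟨0, mem_univ 0⟩ (fun i => (B.mulVec w i - r * w i) / w i) with hε
    have hε0 : 0 < ε := (Finset.lt_inf'_iff _).mpr hεpos
    have hkey : ∀ i, (r + ε) * w i ≤ B.mulVec w i := by
      intro i
      have h1 : ε ≤ (B.mulVec w i - r * w i) / w i := Finset.inf'_le _ (mem_univ i)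
      have h2 := (le_div_iff₀ (hw i)).mp h1
      nlinarith
    have := hpush (r + ε) w (by linarith) (fun i => (hw i).le) hwne hkey
    linarith
  -- positivity of r and u
  have hru : ∀ i, 0 < r * u i := by
    intro i
    have := hBpos u hu0 hune i
    rw [heq] at this
    simpa using this
  have hr : 0 < r := by
    rcases lt_or_ge 0 r with h | h
    · exact h
    · have := hru 0; nlinarith [hu0 0]
  have hu : ∀ i, 0 < u i := fun i => by nlinarith [hru i, hr]
  -- simplicity for B
  have hsimpB : ∀ w : Fin (n+1) → ℝ, B.mulVec w = r • w → ∃ t : ℝ, w = t • u := by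
    intro w hw'
    obtain ⟨i0, -, hi0⟩ :=
      Finset.exists_mem_eq_inf' (⟨0, mem_univ 0⟩ : Finset.univ.Nonempty) (fun i => w i / u i)
    set t := Finset.univ.inf' ⟨0, mem_univ 0⟩ (fun i => w i / u i) with ht
    set z := w - t • u with hz
    have hz0 : ∀ i, 0 ≤ z i := by
      intro i
      have h1 : t ≤ w i / u i := Finset.inf'_le _ (mem_univ i)
      have h2 := (le_div_iff₀ (hu i)).mp h1
      simp only [hz, Pi.sub_apply, Pi.smul_apply, smul_eq_mul]
      linarith
    have hzi0 : z i0 = 0 := by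
      have hti : t = w i0 / u i0 := hi0
      simp only [hz, Pi.sub_apply, Pi.smul_apply, smul_eq_mul, hti]
      rw [div_mul_cancel₀ _ (hu i0).ne', sub_self]
    have hBz : B.mulVec z = r • z := by
      rw [hz, Matrix.mulVec_sub, Matrix.mulVec_smul, hw', heq, smul_sub, smul_comm]
    by_cases hzz : z = 0
    · refine ⟨t, ?_⟩
      have : w - t • u = 0 := hzz
      rw [sub_eq_zero] at this
      exact this
    · exfalso
      have h1 := hBpos z hz0 hzz i0
      rw [hBz] at h1
      simp only [Pi.smul_apply, smul_eq_mul, hzi0, mul_zero] at h1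
      exact lt_irrefl 0 h1
  -- dominance for B among real eigenvalues
  have hdomB : ∀ (μ : ℝ) (w : Fin (n+1) → ℝ), w ≠ 0 → B.mulVec w = μ • w → |μ| ≤ r := by
    intro μ w hwne hw'
    set v := fun i => |w i| with hv
    have hv0 : ∀ i, 0 ≤ v i := fun i => abs_nonneg _
    have hvne : v ≠ 0 := by
      intro h
      apply hwne
      funext i
      have := congrFun h i
      simpa [hv, abs_eq_zero] using this
    have hineq : ∀ i, |μ| * v i ≤ B.mulVec v i := by
      intro i
      have h1 : |μ| * v i = |(B.mulVec w) i| := by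
        rw [hw']; simp [hv, abs_mul]
      rw [h1, hmv, hmv]
      calc |∑ j, B i j * w j| ≤ ∑ j, |B i j * w j| := Finset.abs_sum_le_sum_abs _ _
        _ = ∑ j, B i j * v j := by
            refine Finset.sum_congr rfl fun j _ => ?_
            rw [abs_mul, abs_of_nonneg (hB i j).le]
    exact hpush |μ| v (abs_nonneg μ) hv0 hvne hineq
  -- construct σ
  have hBAu : B.mulVec (A.mulVec u) = r • (A.mulVec u) := by
    have h1 : B.mulVec (A.mulVec u) = A.mulVec (B.mulVec u) := by
      rw [Matrix.mulVec_mulVec, Matrix.mulVec_mulVec, hBdef, mul_assoc]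
    rw [h1, heq, Matrix.mulVec_smul]
  obtain ⟨σ, hAu⟩ := hsimpB (A.mulVec u) hBAu
  have hAu0pos : 0 < A.mulVec u 0 := by
    rw [hmv]
    exact Finset.sum_pos (fun j _ => mul_pos (hrow j) (hu j)) ⟨0, mem_univ 0⟩
  have hσ : 0 < σ := by
    have h1 := hAu0pos
    rw [hAu] at h1
    simp only [Pi.smul_apply, smul_eq_mul] at h1
    nlinarith [hu 0]
  have hσ2 : σ * σ = r := by
    have h1 : B.mulVec u = (σ * σ) • u := by
      rw [hBdef, ← Matrix.mulVec_mulVec, hAu, Matrix.mulVec_smul, hAu, smul_smul]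
    rw [heq] at h1
    have h2 := congrFun h1 0
    simp only [Pi.smul_apply, smul_eq_mul] at h2
    have := hu 0
    nlinarith
  have hA00 : A 0 0 ≤ σ := by
    have h1 : σ * u 0 = ∑ j, A 0 j * u j := by
      have := congrFun hAu 0
      simp only [Pi.smul_apply, smul_eq_mul] at this
      rw [← this, hmv]
    have h2 : A 0 0 * u 0 ≤ ∑ j, A 0 j * u j :=
      Finset.single_le_sum (fun j _ => mul_nonneg (hA 0 j) (hu j).le) (mem_univ 0)
    rw [← h1] at h2
    exact le_of_mul_le_mul_right h2 (hu 0)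
  have hspanA : ∀ v, A.mulVec v = σ • v → ∃ t : ℝ, v = t • u := by
    intro v hv
    apply hsimpB
    have : B.mulVec v = (σ * σ) • v := by
      rw [hBdef, ← Matrix.mulVec_mulVec, hv, Matrix.mulVec_smul, hv, smul_smul]
    rw [this, hσ2]
  refine ⟨σ, u, hA00, hσ, hune, hAu, hspanA, ?_⟩
  intro μ v hvne hv
  have hBv : B.mulVec v = (μ * μ) • v := by
    rw [hBdef, ← Matrix.mulVec_mulVec, hv, Matrix.mulVec_smul, hv, smul_smul]
  have h1 : |μ * μ| ≤ r := hdomB _ v hvne hBv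
  have h2 : μ * μ ≤ σ * σ := by
    rw [abs_mul_self] at h1; rw [hσ2]; exact h1
  have habs : |μ| ≤ σ := by
    have h3 : μ^2 ≤ σ^2 := by nlinarith
    have := Real.sqrt_le_sqrt h3
    rwa [Real.sqrt_sq_eq_abs, Real.sqrt_sq hσ.le] at this
  rcases eq_or_lt_of_le habs with h | h
  · left
    have hμσ : μ = σ ∨ μ = -σ := by
      rcases abs_cases μ with ⟨h4, _⟩ | ⟨h4, _⟩
      · left; rw [← h4, h]
      · right; rw [← neg_eq_iff_eq_neg, ← h4, h]
    rcases hμσ with h4 | h4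
    · exact h4
    · exfalso
      have hμμ : μ * μ = r := by rw [h4]; rw [← hσ2]; ring
      rw [hμμ] at hBv
      obtain ⟨t, ht⟩ := hsimpB v hBv
      have htne : t ≠ 0 := by
        intro h5; rw [h5, zero_smul] at ht; exact hvne ht
      have h5 : A.mulVec v = σ • v := by
        rw [ht, Matrix.mulVec_smul, hAu, smul_smul, mul_comm, ← smul_smul]
      rw [hv] at h5
      have h6 : (μ - σ) • v = 0 := by rw [sub_smul, h5, sub_self]
      rcases smul_eq_zero.mp h6 with h7 | h7
      · have : μ = σ := by linarith [sub_eq_zero.mp h7]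
        rw [this] at h4; linarith
      · exact hvne h7
  · right; exact h

/-- The operator P_τ on polynomials of degree ≤ τ, P_τ[f](x) = (1+x)^τ(f(1/(1+x)) + f(x/(1+x))),
    has a simple dominant positive eigenvalue σ_τ > 1 equal to its spectral radius. -/
theorem P_tau_perron_eigenvalue
    (τ : ℕ) (hτ : 1 ≤ τ)
    (T : Module.End ℝ (Polynomial.degreeLT ℝ (τ + 1)))
    (hT : ∀ p : Polynomial.degreeLT ℝ (τ + 1), ∀ x ∈ Set.Icc (0 : ℝ) 1,
      ((T p : Polynomial ℝ)).eval x =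
        (1 + x) ^ τ * ((p : Polynomial ℝ).eval (1 / (1 + x))
          + (p : Polynomial ℝ).eval (x / (1 + x)))) :
    ∃ σ : ℝ, 1 < σ ∧
      Module.End.HasEigenvalue T σ ∧
      Module.finrank ℝ (Module.End.eigenspace T σ) = 1 ∧
      (∀ μ : ℝ, Module.End.HasEigenvalue T μ → μ ≠ σ → |μ| < σ) ∧
      spectralRadius ℝ T = ENNReal.ofReal σ := by
  classical
  set q : Fin (τ+1) → ℝ[X] :=
    fun k => (1+X)^(τ-(k:ℕ)) + (1+X)^(τ-(k:ℕ)) * X^(k:ℕ) with hqdef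
  set e := Polynomial.degreeLTEquiv ℝ (τ+1) with hedef
  have hcoord : ∀ (p : Polynomial.degreeLT ℝ (τ+1)) (i : Fin (τ+1)),
      e p i = (p : ℝ[X]).coeff i := fun p i => rfl
  -- key scalar identity
  have key : ∀ (i : Fin (τ+1)) (x : ℝ), 0 ≤ x →
      (1+x)^τ * ((1/(1+x))^(i:ℕ) + (x/(1+x))^(i:ℕ))
        = (1+x)^(τ-(i:ℕ)) + (1+x)^(τ-(i:ℕ)) * x^(i:ℕ) := by
    intro i x hx
    have h1 : (0:ℝ) < 1 + x := by linarith
    have h2 : (1+x)^(τ-(i:ℕ)) * (1+x)^(i:ℕ) = (1+x)^τ := by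
      rw [← pow_add, Nat.sub_add_cancel (Nat.lt_succ_iff.mp i.is_lt)]
    have h3 : ((1+x)^(i:ℕ)) ≠ 0 := by positivity
    rw [div_pow, div_pow, one_pow]
    field_simp
    linear_combination (-(1:ℝ)) * h2
  -- T in coordinates
  have hTp : ∀ p : Polynomial.degreeLT ℝ (τ+1),
      (T p : ℝ[X]) = ∑ k : Fin (τ+1), (p : ℝ[X]).coeff k • q k := by
    intro p
    apply Polynomial.eq_of_infinite_eval_eq
    refine (Set.Icc_infinite (by norm_num : (0:ℝ) < 1)).mono ?_
    intro x hx
    obtain ⟨hx0, hx1⟩ := Set.mem_Icc.mp hx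
    show (T p : ℝ[X]).eval x = _
    rw [hT p x hx]
    have hev : ∀ y : ℝ, (p : ℝ[X]).eval y = ∑ i : Fin (τ+1), (p : ℝ[X]).coeff i * y^(i:ℕ) := by
      intro y
      have := Polynomial.eval_eq_sum_degreeLTEquiv (R := ℝ) (n := τ+1) p.2 y
      exact this
    rw [hev, hev, Polynomial.eval_finset_sum]
    rw [← Finset.sum_add_distrib, Finset.mul_sum]
    refine Finset.sum_congr rfl fun i _ => ?_
    rw [Polynomial.eval_smul, smul_eq_mul]
    simp only [hqdef, Polynomial.eval_add, Polynomial.eval_mul, Polynomial.eval_pow,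
      Polynomial.eval_one, Polynomial.eval_X]
    linear_combination ((p:ℝ[X]).coeff i) * key i x hx0
  -- the matrix
  set A : Matrix (Fin (τ+1)) (Fin (τ+1)) ℝ := fun i k => (q k).coeff i with hAdef
  have hAentry : ∀ i k : Fin (τ+1), A i k =
      ((τ-(k:ℕ)).choose i : ℝ) + (if (k:ℕ) ≤ (i:ℕ) then (((τ-(k:ℕ)).choose ((i:ℕ)-(k:ℕ))) : ℝ) else 0) := by
    intro i k
    show (q k).coeff i = _
    simp only [hqdef, Polynomial.coeff_add, Polynomial.coeff_one_add_X_pow,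
      Polynomial.coeff_mul_X_pow']
  have hA : ∀ i j, 0 ≤ A i j := by
    intro i j
    rw [hAentry]
    refine add_nonneg (by positivity) ?_
    split <;> positivity
  have hrow : ∀ j, 0 < A 0 j := by
    intro j
    rw [hAentry]
    have h0 : ((0 : Fin (τ+1)) : ℕ) = 0 := rfl
    rw [h0, Nat.choose_zero_right]
    have h1 : (0:ℝ) ≤ (if (j:ℕ) ≤ 0 then (((τ-(j:ℕ)).choose (0-(j:ℕ))):ℝ) else 0) := by
      split <;> positivity
    push_cast
    linarith
  have hcol : ∀ i, 0 < A i 0 := by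
    intro i
    rw [hAentry]
    have h0 : ((0 : Fin (τ+1)) : ℕ) = 0 := rfl
    rw [h0]
    simp only [Nat.sub_zero, Nat.zero_le, if_true]
    have h1 : 0 < τ.choose i := Nat.choose_pos (Nat.lt_succ_iff.mp i.is_lt)
    have h2 : (0:ℝ) < τ.choose (i:ℕ) := by exact_mod_cast h1
    have h3 : (0:ℝ) ≤ τ.choose ((i:ℕ) - 0) := by positivity
    linarith
  have hA00 : A 0 0 = 2 := by
    rw [hAentry]
    have h0 : ((0 : Fin (τ+1)) : ℕ) = 0 := rfl
    rw [h0]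
    simp [Nat.choose_zero_right]
    norm_num
  have hcomm : ∀ p : Polynomial.degreeLT ℝ (τ+1), e (T p) = A.mulVec (e p) := by
    intro p
    funext i
    rw [hcoord, hTp p, Polynomial.finset_sum_coeff]
    show _ = ∑ j, A i j * e p j
    refine Finset.sum_congr rfl fun k _ => ?_
    rw [Polynomial.coeff_smul, smul_eq_mul, hcoord]
    show (p:ℝ[X]).coeff k * (q k).coeff i = (q k).coeff i * (p:ℝ[X]).coeff k
    ring
  have hTiff : ∀ (μ : ℝ) (p : Polynomial.degreeLT ℝ (τ+1)),
      T p = μ • p ↔ A.mulVec (e p) = μ • (e p) := by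
    intro μ p
    constructor
    · intro h
      rw [← hcomm, h, _root_.map_smul]
    · intro h
      apply e.injective
      rw [hcomm, h, _root_.map_smul]
  obtain ⟨σ, u, hA00σ, hσpos, hune, hAu, hspan, hdom⟩ := perron_core A hA hrow hcol
  have hσ1 : 1 < σ := by rw [hA00] at hA00σ; linarith
  have hu' : (e.symm u : Polynomial.degreeLT ℝ (τ+1)) ≠ 0 := by
    intro h
    apply hune
    rw [← e.apply_symm_apply u, h, map_zero]
  have hmemeig : ∀ (μ : ℝ) (p : Polynomial.degreeLT ℝ (τ+1)),
      p ∈ Module.End.eigenspace T μ ↔ A.mulVec (e p) = μ • e p := by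
    intro μ p
    rw [Module.End.mem_eigenspace_iff]
    exact hTiff μ p
  have heigen : Module.End.HasEigenvalue T σ := by
    have hmem : e.symm u ∈ Module.End.eigenspace T σ := by
      rw [hmemeig, e.apply_symm_apply]
      exact hAu
    exact Module.End.hasEigenvalue_of_hasEigenvector ⟨hmem, hu'⟩
  have hmap : (Module.End.eigenspace T σ).map (e : Polynomial.degreeLT ℝ (τ+1) →ₗ[ℝ] (Fin (τ+1) → ℝ))
      = Submodule.span ℝ {u} := by
    ext v
    rw [Submodule.mem_map, Submodule.mem_span_singleton]
    constructor
    · rintro ⟨p, hp, rfl⟩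
      obtain ⟨t, ht⟩ := hspan (e p) ((hmemeig σ p).mp hp)
      exact ⟨t, ht.symm⟩
    · rintro ⟨t, rfl⟩
      refine ⟨e.symm (t • u), ?_, e.apply_symm_apply _⟩
      rw [hmemeig, e.apply_symm_apply, Matrix.mulVec_smul, hAu, smul_smul, smul_smul, mul_comm]
  have hfin : Module.finrank ℝ (Module.End.eigenspace T σ) = 1 := by
    rw [← LinearEquiv.finrank_map_eq e (Module.End.eigenspace T σ), hmap]
    exact finrank_span_singleton hune
  have hdomT : ∀ μ : ℝ, Module.End.HasEigenvalue T μ → μ ≠ σ → |μ| < σ := by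
    intro μ hμ hne
    obtain ⟨p, hp, hp0⟩ := (Submodule.ne_bot_iff _).mp hμ
    have hev := (hmemeig μ p).mp hp
    have hv0 : e p ≠ 0 := by
      intro h
      exact hp0 (e.map_eq_zero_iff.mp h)
    rcases hdom μ (e p) hv0 hev with h | h
    · exact absurd h hne
    · exact h
  haveI hFD : FiniteDimensional ℝ (Polynomial.degreeLT ℝ (τ+1)) :=
    LinearEquiv.finiteDimensional e.symm
  have hsrad : spectralRadius ℝ T = ENNReal.ofReal σ := by
    unfold spectralRadius
    apply le_antisymm
    · refine iSup₂_le fun μ hμ => ?_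
      have hμ' : Module.End.HasEigenvalue T μ :=
        Module.End.hasEigenvalue_iff_mem_spectrum.mpr hμ
      have habs : |μ| ≤ σ := by
        by_cases h : μ = σ
        · rw [h, abs_of_pos hσpos]
        · exact (hdomT μ hμ' h).le
      rw [← enorm_eq_nnnorm, Real.enorm_eq_ofReal_abs]
      exact ENNReal.ofReal_le_ofReal habs
    · have hmem : σ ∈ spectrum ℝ T := Module.End.hasEigenvalue_iff_mem_spectrum.mp heigen
      have h2 : ENNReal.ofReal σ = (‖σ‖₊ : ℝ≥0∞) := by
        rw [← enorm_eq_nnnorm, Real.enorm_eq_ofReal_abs, abs_of_pos hσpos]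
      rw [h2]
      exact le_iSup₂ (f := fun k (_ : k ∈ spectrum ℝ T) => (‖k‖₊ : ℝ≥0∞)) σ hmem
  exact ⟨σ, hσ1, heigen, hfin, hdomT, hsrad⟩
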